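/- Let S be a right coherent monoid. Then every almost pure S-act is absolutely pure. -/

import Mathlib

universe u v w

/-- A right `S`-act: a set with an action `A × S → A` with `a·1 = a`, `a·(st) = (a·s)·t`. -/
class RAct (S : Type u) [Monoid S] (A : Type v) where
  act : A → S → A
  act_one : ∀ a : A, act a 1 = a
  act_mul : ∀ (a : A) (s t : S), act a (s * t) = act (act a s) t

infixl:70 " ⊳ " => RAct.act

/-- An `S`-morphism of right `S`-acts. -/
def IsRActHom (S : Type u) [Monoid S] {A : Type v} {B : Type w}
    [RAct S A] [RAct S B] (f : A → B) : Prop :=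
  ∀ (a : A) (s : S), f (a ⊳ s) = f a ⊳ s

/-- The free `S`-act `F_S(X) = X × S`, with `(x,s)·t = (x, st)`. -/
instance freeAct (S : Type u) [Monoid S] (X : Type w) : RAct S (X × S) where
  act p s := (p.1, p.2 * s)
  act_one p := by simp
  act_mul p s t := by simp [mul_assoc]

/-- Disjoint union of two `S`-acts. -/
instance sumAct (S : Type u) [Monoid S] {A : Type v} {B : Type w} [RAct S A] [RAct S B] :
    RAct S (A ⊕ B) where
  act x s := Sum.elim (fun a => Sum.inl (a ⊳ s)) (fun b => Sum.inr (b ⊳ s)) x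
  act_one := by rintro (a | b) <;> simp [RAct.act_one]
  act_mul := by rintro (a | b) s t <;> simp [RAct.act_mul]

/-- Congruence on a right `S`-act. -/
structure IsActCongr (S : Type u) [Monoid S] {A : Type v} [RAct S A]
    (r : A → A → Prop) : Prop where
  refl : ∀ a, r a a
  symm : ∀ {a b}, r a b → r b a
  trans : ∀ {a b c}, r a b → r b c → r a c
  act : ∀ {a b} (s : S), r a b → r (a ⊳ s) (b ⊳ s)

/-- The act congruence generated by a set of pairs `H`. -/
def congGen (S : Type u) [Monoid S] {A : Type v} [RAct S A]
    (H : Set (A × A)) (a b : A) : Prop :=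
  ∀ r : A → A → Prop, IsActCongr S r → (∀ p ∈ H, r p.1 p.2) → r a b

theorem isActCongr_congGen (S : Type u) [Monoid S] {A : Type v} [RAct S A]
    (H : Set (A × A)) : IsActCongr S (congGen S H) where
  refl a := fun _r hr _ => hr.refl a
  symm h := fun r hr hH => hr.symm (h r hr hH)
  trans h1 h2 := fun r hr hH => hr.trans (h1 r hr hH) (h2 r hr hH)
  act s h := fun r hr hH => hr.act s (h r hr hH)

/-- Equations over an `S`-act `A` with variables from `X`:
`xs = yt` (which includes `xs = xt`) or `xs = a`. -/
inductive Eqn (S : Type u) (A : Type v) (X : Type w) where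
  | vv : X → S → X → S → Eqn S A X
  | vc : X → S → A → Eqn S A X

/-- `b : X → C` is a solution of `E` in the act `C`, where `ι : A → C` interprets constants. -/
def IsSolution (S : Type u) [Monoid S] {A : Type v} {X : Type w} {C : Type*}
    [RAct S C] (ι : A → C) (E : Set (Eqn S A X)) (b : X → C) : Prop :=
  (∀ x s y t, Eqn.vv x s y t ∈ E → b x ⊳ s = b y ⊳ t) ∧
  (∀ x s a, Eqn.vc x s a ∈ E → b x ⊳ s = ι a)

/-- A set of equations over `A` is consistent if it has a solution in some act containing `A`. -/
def Consistent (S : Type u) [Monoid S] {A : Type v} {X : Type w} [RAct S A]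
    (E : Set (Eqn S A X)) : Prop :=
  ∃ (B : Type (max u v w)) (_ : RAct S B) (ι : A → B),
    Function.Injective ι ∧ IsRActHom S ι ∧ ∃ b : X → B, IsSolution S ι E b

/-- `A` is `n`-absolutely pure: every finite consistent system of equations over `A`
in at most `n` variables has a solution in `A`. -/
def NPure (S : Type u) [Monoid S] (A : Type v) [RAct S A] (n : ℕ) : Prop :=
  ∀ E : Set (Eqn S A (Fin n)), E.Finite → Consistent S E →
    ∃ c : Fin n → A, IsSolution S id E c

/-- Almost pure: 1-absolutely pure. -/
def AlmostPure (S : Type u) [Monoid S] (A : Type v) [RAct S A] : Prop :=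
  NPure S A 1

/-- Absolutely pure: `n`-absolutely pure for every `n`. -/
def AbsolutelyPure (S : Type u) [Monoid S] (A : Type v) [RAct S A] : Prop :=
  ∀ n : ℕ, NPure S A n

/-- The pairs `H(Σ)` in the free act coming from constant-free equations of `E`. -/
def Hcf (S : Type u) [Monoid S] {A : Type v} {X : Type w}
    (E : Set (Eqn S A X)) : Set ((X × S) × (X × S)) :=
  {p | ∃ x u y v, Eqn.vv x u y v ∈ E ∧ p = ((x, u), (y, v))}

/-- The pairs `H(Σ) ∪ K(Σ)` on the disjoint union `A ⊔ F_S(X)`. -/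
def HK (S : Type u) [Monoid S] {A : Type v} {X : Type w}
    (E : Set (Eqn S A X)) : Set ((A ⊕ X × S) × (A ⊕ X × S)) :=
  {p | (∃ x u y v, Eqn.vv x u y v ∈ E ∧ p = (Sum.inr (x, u), Sum.inr (y, v))) ∨
       (∃ x s a, Eqn.vc x s a ∈ E ∧ p = (Sum.inr (x, s), Sum.inl a))}

/-- Quotient of an act by a generated congruence. -/
instance quotAct (S : Type u) [Monoid S] {A : Type v} [RAct S A] (H : Set (A × A)) :
    RAct S (Quot (congGen S H)) where
  act q s := Quot.map (fun a => a ⊳ s) (fun _a _b h => (isActCongr_congGen S H).act s h) q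
  act_one := by
    rintro ⟨a⟩
    show Quot.mk _ (a ⊳ (1 : S)) = Quot.mk _ a
    rw [RAct.act_one]
  act_mul := by
    rintro ⟨a⟩ s t
    show Quot.mk _ (a ⊳ (s * t)) = Quot.mk _ (a ⊳ s ⊳ t)
    rw [RAct.act_mul]

/-- The canonical extension `A(Σ) = (A ⊔ F_S(X)) / κ_Σ`. -/
abbrev ActExt (S : Type u) [Monoid S] {A : Type v} {X : Type w} [RAct S A]
    (E : Set (Eqn S A X)) : Type (max u v w) :=
  Quot (congGen S (HK S E))

/-- The natural map `ν_Σ : A → A(Σ)`. -/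
def extOfBase (S : Type u) [Monoid S] {A : Type v} {X : Type w} [RAct S A]
    (E : Set (Eqn S A X)) (a : A) : ActExt S E :=
  Quot.mk _ (Sum.inl a)

/-- A finitely generated `S`-act. -/
def IsFG (S : Type u) [Monoid S] (A : Type v) [RAct S A] : Prop :=
  ∃ T : Finset A, ∀ a : A, ∃ t ∈ T, ∃ s : S, a = t ⊳ s

/-- A monogenic (cyclic) `S`-act. -/
def Monogenic (S : Type u) [Monoid S] (C : Type v) [RAct S C] : Prop :=
  ∃ c : C, ∀ y : C, ∃ s : S, y = c ⊳ s

/-- `A` embeds into `C` as an `S`-act. -/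
def ActEmbeds (S : Type u) [Monoid S] (A : Type v) (C : Type w) [RAct S A] [RAct S C] : Prop :=
  ∃ ι : A → C, IsRActHom S ι ∧ Function.Injective ι

/-- A finitely presented `S`-act: isomorphic to `F_S(X)/ρ` with `X` finite and
`ρ` a finitely generated congruence. -/
def IsFP (S : Type u) [Monoid S] (A : Type v) [RAct S A] : Prop :=
  ∃ (n : ℕ) (H : Set ((Fin n × S) × (Fin n × S))), H.Finite ∧
    ∃ φ : Fin n × S → A, IsRActHom S φ ∧ Function.Surjective φ ∧
      ∀ p q : Fin n × S, φ p = φ q ↔ congGen S H p q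

/-- A right coherent monoid. -/
def RightCoherent (S : Type u) [Monoid S] : Prop :=
  ∀ (A B : Type u) (_ : RAct S A) (_ : RAct S B) (ι : B → A),
    IsRActHom S ι → Function.Injective ι → IsFP S A → IsFG S B → IsFP S B

/-- The fem-property: every finitely generated `S`-act embeds into a monogenic act. -/
def FemProperty (S : Type u) [Monoid S] : Prop :=
  ∀ (A : Type u) (_ : RAct S A), IsFG S A → ∃ (C : Type u) (_ : RAct S C),
    Monogenic S C ∧ ActEmbeds S A C

/-- A subact of an `S`-act. -/
structure Subact (S : Type u) [Monoid S] (B : Type v) [RAct S B] where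
  carrier : Set B
  closed : ∀ b ∈ carrier, ∀ s : S, b ⊳ s ∈ carrier

instance subAct (S : Type u) [Monoid S] {B : Type v} [RAct S B] (T : Subact S B) :
    RAct S T.carrier where
  act a s := ⟨a.1 ⊳ s, T.closed a.1 a.2 s⟩
  act_one a := Subtype.ext (RAct.act_one a.1)
  act_mul a s t := Subtype.ext (RAct.act_mul a.1 s t)


def BuiltFrom (S : Type u) [Monoid S] {A B : Type v} [RAct S A] [RAct S B]
    (ι : A → B) (P : ℕ → Prop) : Prop :=
  IsRActHom S ι ∧ Function.Injective ι ∧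
  ∃ (ξ : Ordinal.{v}) (C : Ordinal.{v} → Subact S B),
    (C 0).carrier = Set.range ι ∧
    (∀ i j : Ordinal.{v}, i ≤ j → (C i).carrier ⊆ (C j).carrier) ∧
    (C ξ).carrier = Set.univ ∧
    (∀ ζ : Ordinal.{v}, ζ ≤ ξ → Order.IsSuccLimit ζ → (C ζ).carrier = ⋃ i ∈ Set.Iio ζ, (C i).carrier) ∧
    (∀ i : Ordinal.{v}, i < ξ → ∃ m : ℕ, P m ∧
      (∃ E : Set (Eqn S (↥(C i).carrier) (Fin m)), Consistent S E ∧
        (∃ e : ActExt S E → B, IsRActHom S e ∧ Function.Injective e ∧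
          Set.range e = (C (i + 1)).carrier ∧
          (∀ d : ↥(C i).carrier, e (extOfBase S E d) = d.1))))

section AuxBasic

variable {S : Type u} [Monoid S]

theorem congGen_of_mem {A : Type v} [RAct S A] {H : Set (A × A)} {p q : A}
    (hp : (p, q) ∈ H) : congGen S H p q := fun _r _hr hH => hH (p, q) hp

theorem congGen_equivalence {A : Type v} [RAct S A] (H : Set (A × A)) :
    Equivalence (congGen S H) :=
  ⟨(isActCongr_congGen S H).refl, (isActCongr_congGen S H).symm,
    (isActCongr_congGen S H).trans⟩

theorem quot_mk_eq_iff {A : Type v} [RAct S A] (H : Set (A × A)) (a b : A) :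
    Quot.mk (congGen S H) a = Quot.mk (congGen S H) b ↔ congGen S H a b := by
  rw [Quot.eq, (congGen_equivalence H).eqvGen_iff]

theorem quot_act_mk {A : Type v} [RAct S A] (H : Set (A × A)) (a : A) (s : S) :
    (Quot.mk (congGen S H) a) ⊳ s = Quot.mk (congGen S H) (a ⊳ s) := rfl

/-- Universal property: a hom respecting the generators respects the congruence. -/
theorem congGen_lift {A : Type v} {D : Type w} [RAct S A] [RAct S D] {H : Set (A × A)}
    (g : A → D) (hg : IsRActHom S g) (hH : ∀ p ∈ H, g p.1 = g p.2) {a b : A}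
    (h : congGen S H a b) : g a = g b :=
  h (fun x y => g x = g y)
    ⟨fun _ => rfl, Eq.symm, Eq.trans, fun s e => by rw [hg, hg, e]⟩ hH

end AuxBasic
theorem free_one_act {S : Type u} [inst : Monoid S] {X : Type w} (p : X × S) :
    @RAct.act S inst (X × S) (freeAct S X) (p.1, (1 : S)) p.2 = p := by
  show (p.1, 1 * p.2) = p
  rw [one_mul]
section Push

variable {S : Type u} [Monoid S] {B : Type v} {A : Type w} [RAct S B] [RAct S A]

/-- Generators for the pushout of the inclusion of a subact `Dset ⊆ B` along `f`. -/
def pushGen (Dset : Set B) (f : B → A) : Set ((B ⊕ A) × (B ⊕ A)) :=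
  {p | ∃ d ∈ Dset, p = (Sum.inl d, Sum.inr (f d))}

open Classical in
/-- Invariant classifying the classes of the pushout. -/
noncomputable def pushVal (Dset : Set B) (f : B → A) : B ⊕ A → B ⊕ A
  | Sum.inl p => if p ∈ Dset then Sum.inr (f p) else Sum.inl p
  | Sum.inr a => Sum.inr a

variable {Dset : Set B} {f : B → A}

open Classical in
theorem pushVal_congr
    (hD : ∀ d ∈ Dset, ∀ s : S, d ⊳ s ∈ Dset)
    (hf : ∀ d ∈ Dset, ∀ s : S, f (d ⊳ s) = f d ⊳ s) {z z' : B ⊕ A}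
    (h : congGen S (pushGen Dset f) z z') : pushVal Dset f z = pushVal Dset f z' := by
  refine h (fun x y => pushVal Dset f x = pushVal Dset f y)
    ⟨fun _ => rfl, Eq.symm, Eq.trans, ?_⟩ ?_
  · rintro (p | a) (q | a') s hxy
    · show pushVal Dset f (Sum.inl (p ⊳ s)) = pushVal Dset f (Sum.inl (q ⊳ s))
      by_cases hp : p ∈ Dset <;> by_cases hq : q ∈ Dset <;>
        simp only [pushVal, hp, hq, if_pos, if_neg, if_true, if_false] at hxy
      · have hfpq : f p = f q := by simpa using hxy
        simp only [pushVal, hD p hp s, hD q hq s, if_pos, if_true]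
        rw [hf p hp s, hf q hq s, hfpq]
      · exact absurd hxy (by simp)
      · exact absurd hxy (by simp)
      · obtain rfl : p = q := by simpa using hxy
        rfl
    · show pushVal Dset f (Sum.inl (p ⊳ s)) = pushVal Dset f (Sum.inr (a' ⊳ s))
      by_cases hp : p ∈ Dset <;>
        simp only [pushVal, hp, if_pos, if_neg, if_true, if_false] at hxy
      · have hfp : f p = a' := by simpa using hxy
        simp only [pushVal, hD p hp s, if_pos, if_true]
        rw [hf p hp s, hfp]
      · exact absurd hxy (by simp)
    · show pushVal Dset f (Sum.inr (a ⊳ s)) = pushVal Dset f (Sum.inl (q ⊳ s))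
      by_cases hq : q ∈ Dset <;>
        simp only [pushVal, hq, if_pos, if_neg, if_true, if_false] at hxy
      · have hfq : f q = a := by simpa using hxy.symm
        simp only [pushVal, hD q hq s, if_pos, if_true]
        rw [hf q hq s, hfq]
      · exact absurd hxy (by simp)
    · obtain rfl : a = a' := by simpa [pushVal] using hxy
      rfl
  · rintro ⟨p, q⟩ ⟨d, hd, hpq⟩
    obtain ⟨rfl, rfl⟩ := Prod.mk.injEq .. ▸ hpq
    simp [pushVal, hd]

theorem push_inr_injective
    (hD : ∀ d ∈ Dset, ∀ s : S, d ⊳ s ∈ Dset)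
    (hf : ∀ d ∈ Dset, ∀ s : S, f (d ⊳ s) = f d ⊳ s) :
    Function.Injective (fun a : A => Quot.mk (congGen S (pushGen Dset f)) (Sum.inr a)) := by
  intro a a' h
  have := pushVal_congr (S := S) hD hf ((quot_mk_eq_iff _ _ _).mp h)
  simpa [pushVal] using this

open Classical in
theorem push_inl_eq_inr
    (hD : ∀ d ∈ Dset, ∀ s : S, d ⊳ s ∈ Dset)
    (hf : ∀ d ∈ Dset, ∀ s : S, f (d ⊳ s) = f d ⊳ s) (p : B) (a : A) :
    Quot.mk (congGen S (pushGen Dset f)) (Sum.inl p) =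
      Quot.mk (congGen S (pushGen Dset f)) (Sum.inr a) ↔ p ∈ Dset ∧ f p = a := by
  constructor
  · intro h
    have := pushVal_congr (S := S) hD hf ((quot_mk_eq_iff _ _ _).mp h)
    by_cases hp : p ∈ Dset <;> simp [pushVal, hp] at this
    · exact ⟨hp, this⟩
  · rintro ⟨hp, rfl⟩
    exact Quot.sound (congGen_of_mem ⟨p, hp, rfl⟩)

open Classical in
theorem push_inl_eq_inl
    (hD : ∀ d ∈ Dset, ∀ s : S, d ⊳ s ∈ Dset)
    (hf : ∀ d ∈ Dset, ∀ s : S, f (d ⊳ s) = f d ⊳ s) (p q : B) :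
    Quot.mk (congGen S (pushGen Dset f)) (Sum.inl p) =
      Quot.mk (congGen S (pushGen Dset f)) (Sum.inl q) ↔
      p = q ∨ (p ∈ Dset ∧ q ∈ Dset ∧ f p = f q) := by
  constructor
  · intro h
    have := pushVal_congr (S := S) hD hf ((quot_mk_eq_iff _ _ _).mp h)
    by_cases hp : p ∈ Dset <;> by_cases hq : q ∈ Dset <;>
      simp [pushVal, hp, hq] at this
    · exact Or.inr ⟨hp, hq, this⟩
    · exact Or.inl this
  · rintro (rfl | ⟨hp, hq, hfpq⟩)
    · rfl
    · refine ((quot_mk_eq_iff _ _ _).mpr ?_)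
      refine (isActCongr_congGen S _).trans (congGen_of_mem ⟨p, hp, rfl⟩) ?_
      rw [hfpq]
      exact (isActCongr_congGen S _).symm (congGen_of_mem ⟨q, hq, rfl⟩)

theorem push_inr_hom :
    IsRActHom S (fun a : A => Quot.mk (congGen S (pushGen Dset f)) (Sum.inr a)) := by
  intro a s
  rfl

end Push
section Transport

variable {S : Type u} [Monoid S]

theorem congGen_map_iff {C : Type v} {D : Type w} [RAct S C] [RAct S D]
    (g : C ≃ D) (hg : IsRActHom S g) (H : Set (C × C)) (a b : C) :
    congGen S ((fun p : C × C => ((g p.1 : D), (g p.2 : D))) '' H) (g a) (g b) ↔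
      congGen S H a b := by
  have hgsymm : IsRActHom S g.symm := by
    intro d s
    apply g.injective
    rw [g.apply_symm_apply, hg, g.apply_symm_apply]
  constructor
  · intro h
    have := h (fun x y => congGen S H (g.symm x) (g.symm y))
      ⟨fun x => (isActCongr_congGen S H).refl _,
       fun h => (isActCongr_congGen S H).symm h,
       fun h1 h2 => (isActCongr_congGen S H).trans h1 h2,
       fun s h => by
         rw [hgsymm, hgsymm]
         exact (isActCongr_congGen S H).act s h⟩
      (by
        rintro ⟨x, y⟩ ⟨⟨p, q⟩, hpq, hxy⟩
        obtain ⟨rfl, rfl⟩ := Prod.mk.injEq .. ▸ hxy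
        simpa [g.symm_apply_apply] using congGen_of_mem hpq)
    simpa [g.symm_apply_apply] using this
  · intro h
    exact h (fun x y => congGen S _ (g x) (g y))
      ⟨fun x => (isActCongr_congGen S _).refl _,
       fun h => (isActCongr_congGen S _).symm h,
       fun h1 h2 => (isActCongr_congGen S _).trans h1 h2,
       fun s h => by
         rw [hg, hg]
         exact (isActCongr_congGen S _).act s h⟩
      (fun p hp => congGen_of_mem ⟨p, hp, rfl⟩)

/-- A quotient of a free act on a finite variable type by a finitely generated
congruence is finitely presented. -/
theorem isFP_quot_of_equiv {n : ℕ} {V : Type w} (e : V ≃ Fin n)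
    (H : Set ((V × S) × (V × S))) (hH : H.Finite) :
    IsFP S (Quot (congGen S H)) := by
  classical
  let g : V × S ≃ Fin n × S := Equiv.prodCongr e (Equiv.refl S)
  have hg : IsRActHom S g := fun p s => rfl
  refine ⟨n, (fun p : (V × S) × (V × S) => ((g p.1 : Fin n × S), (g p.2 : Fin n × S))) '' H,
    hH.image _, fun p => Quot.mk _ (g.symm p), fun p s => rfl, ?_, ?_⟩
  · rintro ⟨z⟩
    exact ⟨g z, by simp⟩
  · intro p q
    rw [quot_mk_eq_iff]
    have := congGen_map_iff (S := S) g hg H (g.symm p) (g.symm q)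
    simp only [g.apply_symm_apply] at this
    exact this.symm
end Transport
set_option linter.unusedSectionVars false

section Main

variable {S : Type u} [Monoid S] {A : Type v} [RAct S A] {N k : ℕ}

/-- Generating pairs for the finitely presented act `Q` associated to a system `E`:
variables `Fin (N+1)`, plus one generator `y_i` for each `vc`-equation. -/
def bigH (E : Set (Eqn S A (Fin (N + 1)))) (xOf : Fin k → Fin (N + 1)) (sOf : Fin k → S) :
    Set (((Fin (N + 1) ⊕ Fin k) × S) × ((Fin (N + 1) ⊕ Fin k) × S)) :=
  {p | (∃ x u y v, Eqn.vv x u y v ∈ E ∧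
          p = (((Sum.inl x : Fin (N + 1) ⊕ Fin k), u), ((Sum.inl y : Fin (N + 1) ⊕ Fin k), v))) ∨
    ∃ i : Fin k,
      p = (((Sum.inl (xOf i) : Fin (N + 1) ⊕ Fin k), sOf i), ((Sum.inr i : Fin (N + 1) ⊕ Fin k), 1))}

/-- Auxiliary: the pair-set contributed by a single `vv`-equation. -/
def vvPairSet : Eqn S A (Fin (N + 1)) →
    Set (((Fin (N + 1) ⊕ Fin k) × S) × ((Fin (N + 1) ⊕ Fin k) × S))
  | Eqn.vv x u y v =>
      {(((Sum.inl x : Fin (N + 1) ⊕ Fin k), u), ((Sum.inl y : Fin (N + 1) ⊕ Fin k), v))}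
  | Eqn.vc _ _ _ => ∅

theorem bigH_finite {E : Set (Eqn S A (Fin (N + 1)))} (hE : E.Finite)
    (xOf : Fin k → Fin (N + 1)) (sOf : Fin k → S) : (bigH E xOf sOf).Finite := by
  have hsub : bigH E xOf sOf ⊆
      (⋃ e ∈ E, vvPairSet (k := k) e) ∪ Set.range (fun i : Fin k =>
        (((Sum.inl (xOf i) : Fin (N + 1) ⊕ Fin k), sOf i),
          ((Sum.inr i : Fin (N + 1) ⊕ Fin k), 1))) := by
    rintro p (⟨x, u, y, v, hvv, rfl⟩ | ⟨i, rfl⟩)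
    · exact Or.inl (Set.mem_biUnion hvv rfl)
    · exact Or.inr ⟨i, rfl⟩
  refine Set.Finite.subset (Set.Finite.union
    (Set.Finite.biUnion hE fun e _ => ?_) (Set.finite_range _)) hsub
  cases e with
  | vv x u y v => exact Set.finite_singleton _
  | vc x s a => exact Set.finite_empty

/-- Any solution of `E` induces an evaluation on the free act that respects `bigH`. -/
theorem bigH_lift {Bw : Type w} [RAct S Bw] {E : Set (Eqn S A (Fin (N + 1)))}
    {xOf : Fin k → Fin (N + 1)} {sOf : Fin k → S}
    (ι : A → Bw) (b : Fin (N + 1) → Bw) (hb : IsSolution S ι E b) (aOf : Fin k → A)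
    (hvcE : ∀ i, Eqn.vc (xOf i) (sOf i) (aOf i) ∈ E)
    {z z' : (Fin (N + 1) ⊕ Fin k) × S} (h : congGen S (bigH E xOf sOf) z z') :
    (Sum.elim b (fun i => ι (aOf i)) z.1) ⊳ z.2 = (Sum.elim b (fun i => ι (aOf i)) z'.1) ⊳ z'.2 := by
  refine congGen_lift (fun z : (Fin (N + 1) ⊕ Fin k) × S =>
    (Sum.elim b (fun i => ι (aOf i)) z.1) ⊳ z.2) (fun z s => ?_) ?_ h
  · show Sum.elim b _ z.1 ⊳ (z.2 * s) = _
    rw [RAct.act_mul]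
  · rintro ⟨p, q⟩ (⟨x, u, y, v, hvv, hpq⟩ | ⟨i, hpq⟩) <;>
      obtain ⟨rfl, rfl⟩ := Prod.mk.injEq .. ▸ hpq
    · exact hb.1 x u y v hvv
    · show b (xOf i) ⊳ sOf i = ι (aOf i) ⊳ (1 : S)
      rw [RAct.act_one]
      exact hb.2 _ _ _ (hvcE i)

end Main
section Main2

variable {S : Type u} [Monoid S] {A : Type v} [RAct S A] {N k : ℕ}

theorem y_rep_eq {Bw : Type w} [RAct S Bw] {E : Set (Eqn S A (Fin (N + 1)))}
    {xOf : Fin k → Fin (N + 1)} {sOf : Fin k → S}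
    (ι : A → Bw) (hιinj : Function.Injective ι) (hιhom : IsRActHom S ι)
    (b : Fin (N + 1) → Bw) (hb : IsSolution S ι E b) (aOf : Fin k → A)
    (hvcE : ∀ i, Eqn.vc (xOf i) (sOf i) (aOf i) ∈ E) {i i' : Fin k} {w w' : S}
    (h : Quot.mk (congGen S (bigH E xOf sOf)) ((Sum.inr i : Fin (N + 1) ⊕ Fin k), w) =
      Quot.mk (congGen S (bigH E xOf sOf)) ((Sum.inr i' : Fin (N + 1) ⊕ Fin k), w')) :
    aOf i ⊳ w = aOf i' ⊳ w' := by
  have := bigH_lift ι b hb aOf hvcE ((quot_mk_eq_iff _ _ _).mp h)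
  simp only [Sum.elim_inr] at this
  apply hιinj
  rw [hιhom, hιhom]
  exact this

/-- Generators of the congruence `ρ` identifying the `y_i ⊳ w` according to `A`. -/
def rhoGen (E : Set (Eqn S A (Fin (N + 1)))) (xOf : Fin k → Fin (N + 1)) (sOf : Fin k → S)
    (aOf : Fin k → A) :
    Set (Quot (congGen S (bigH E xOf sOf)) × Quot (congGen S (bigH E xOf sOf))) :=
  {p | ∃ i w i' w', aOf i ⊳ w = aOf i' ⊳ w' ∧
    p = (Quot.mk (congGen S (bigH E xOf sOf)) ((Sum.inr i : Fin (N + 1) ⊕ Fin k), w),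
         Quot.mk (congGen S (bigH E xOf sOf)) ((Sum.inr i' : Fin (N + 1) ⊕ Fin k), w'))}

theorem rho_char {Bw : Type w} [RAct S Bw] {E : Set (Eqn S A (Fin (N + 1)))}
    {xOf : Fin k → Fin (N + 1)} {sOf : Fin k → S}
    (ι : A → Bw) (hιinj : Function.Injective ι) (hιhom : IsRActHom S ι)
    (b : Fin (N + 1) → Bw) (hb : IsSolution S ι E b) (aOf : Fin k → A)
    (hvcE : ∀ i, Eqn.vc (xOf i) (sOf i) (aOf i) ∈ E)
    (q q' : Quot (congGen S (bigH E xOf sOf))) :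
    congGen S (rhoGen E xOf sOf aOf) q q' ↔ q = q' ∨ ∃ i w i' w',
      q = Quot.mk (congGen S (bigH E xOf sOf)) ((Sum.inr i : Fin (N + 1) ⊕ Fin k), w) ∧
      q' = Quot.mk (congGen S (bigH E xOf sOf)) ((Sum.inr i' : Fin (N + 1) ⊕ Fin k), w') ∧
      aOf i ⊳ w = aOf i' ⊳ w' := by
  constructor
  · intro h
    refine h (fun q1 q2 => q1 = q2 ∨ ∃ i w i' w',
      q1 = Quot.mk (congGen S (bigH E xOf sOf)) ((Sum.inr i : Fin (N + 1) ⊕ Fin k), w) ∧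
      q2 = Quot.mk (congGen S (bigH E xOf sOf)) ((Sum.inr i' : Fin (N + 1) ⊕ Fin k), w') ∧
      aOf i ⊳ w = aOf i' ⊳ w') ⟨fun _ => Or.inl rfl, ?_, ?_, ?_⟩ ?_
    · rintro q1 q2 (rfl | ⟨i, w, i', w', h1, h2, hv⟩)
      · exact Or.inl rfl
      · exact Or.inr ⟨i', w', i, w, h2, h1, hv.symm⟩
    · rintro q1 q2 q3 (rfl | ⟨i, w, i', w', h1, h2, hv⟩) h23
      · exact h23
      · rcases h23 with rfl | ⟨j, ω, j', ω', h1', h2', hv'⟩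
        · exact Or.inr ⟨i, w, i', w', h1, h2, hv⟩
        · refine Or.inr ⟨i, w, j', ω', h1, h2', ?_⟩
          have hkey : aOf i' ⊳ w' = aOf j ⊳ ω :=
            y_rep_eq ι hιinj hιhom b hb aOf hvcE (h2 ▸ h1')
          rw [hv, hkey, hv']
    · rintro q1 q2 s (rfl | ⟨i, w, i', w', rfl, rfl, hv⟩)
      · exact Or.inl rfl
      · refine Or.inr ⟨i, w * s, i', w' * s, rfl, rfl, ?_⟩
        rw [RAct.act_mul, RAct.act_mul, hv]
    · rintro ⟨p, q⟩ ⟨i, w, i', w', hv, hpq⟩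
      obtain ⟨rfl, rfl⟩ := Prod.mk.injEq .. ▸ hpq
      exact Or.inr ⟨i, w, i', w', rfl, rfl, hv⟩
  · rintro (rfl | ⟨i, w, i', w', rfl, rfl, hv⟩)
    · exact (isActCongr_congGen S _).refl _
    · exact congGen_of_mem ⟨i, w, i', w', hv, rfl⟩

/-- The subact of `B₀` corresponding to the subact of `A` generated by the constants. -/
def dset0 (E : Set (Eqn S A (Fin (N + 1)))) (xOf : Fin k → Fin (N + 1)) (sOf : Fin k → S)
    (aOf : Fin k → A) : Set (Quot (congGen S (rhoGen E xOf sOf aOf))) :=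
  {q | ∃ i w, q = Quot.mk (congGen S (rhoGen E xOf sOf aOf))
    (Quot.mk (congGen S (bigH E xOf sOf)) ((Sum.inr i : Fin (N + 1) ⊕ Fin k), w))}

/-- Partial retraction of `B₀` onto `A`, defined on `dset0`. -/
noncomputable def f0 [Nonempty A] (E : Set (Eqn S A (Fin (N + 1)))) (xOf : Fin k → Fin (N + 1))
    (sOf : Fin k → S) (aOf : Fin k → A) : Quot (congGen S (rhoGen E xOf sOf aOf)) → A :=
  fun q =>
    @dite _ (∃ i w, q = Quot.mk (congGen S (rhoGen E xOf sOf aOf))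
        (Quot.mk (congGen S (bigH E xOf sOf)) ((Sum.inr i : Fin (N + 1) ⊕ Fin k), w)))
      (Classical.propDecidable _)
      (fun h => aOf h.choose ⊳ h.choose_spec.choose)
      (fun _ => Classical.arbitrary A)

theorem f0_val [Nonempty A] {Bw : Type w} [RAct S Bw] {E : Set (Eqn S A (Fin (N + 1)))}
    {xOf : Fin k → Fin (N + 1)} {sOf : Fin k → S}
    (ι : A → Bw) (hιinj : Function.Injective ι) (hιhom : IsRActHom S ι)
    (b : Fin (N + 1) → Bw) (hb : IsSolution S ι E b) (aOf : Fin k → A)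
    (hvcE : ∀ i, Eqn.vc (xOf i) (sOf i) (aOf i) ∈ E) (i : Fin k) (w : S) :
    f0 E xOf sOf aOf (Quot.mk (congGen S (rhoGen E xOf sOf aOf))
      (Quot.mk (congGen S (bigH E xOf sOf)) ((Sum.inr i : Fin (N + 1) ⊕ Fin k), w)))
      = aOf i ⊳ w := by
  have hex : ∃ i' w', Quot.mk (congGen S (rhoGen E xOf sOf aOf))
      (Quot.mk (congGen S (bigH E xOf sOf)) ((Sum.inr i : Fin (N + 1) ⊕ Fin k), w)) =
      Quot.mk (congGen S (rhoGen E xOf sOf aOf))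
      (Quot.mk (congGen S (bigH E xOf sOf)) ((Sum.inr i' : Fin (N + 1) ⊕ Fin k), w')) :=
    ⟨i, w, rfl⟩
  simp only [f0]
  rw [dif_pos hex]
  set i0 := hex.choose
  set w0 := hex.choose_spec.choose
  have hspec := hex.choose_spec.choose_spec
  have hρ := (quot_mk_eq_iff _ _ _).mp hspec
  rcases (rho_char ι hιinj hιhom b hb aOf hvcE _ _).mp hρ with heq | ⟨j, ω, j', ω', h1, h2, hv⟩
  · exact (y_rep_eq ι hιinj hιhom b hb aOf hvcE heq).symm
  · have k1 : aOf i ⊳ w = aOf j ⊳ ω := y_rep_eq ι hιinj hιhom b hb aOf hvcE h1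
    have k2 : aOf i0 ⊳ w0 = aOf j' ⊳ ω' := y_rep_eq ι hιinj hιhom b hb aOf hvcE h2
    rw [k1, k2]
    exact hv.symm

theorem dset0_closed (E : Set (Eqn S A (Fin (N + 1)))) (xOf : Fin k → Fin (N + 1))
    (sOf : Fin k → S) (aOf : Fin k → A) :
    ∀ d ∈ dset0 E xOf sOf aOf, ∀ s : S, d ⊳ s ∈ dset0 E xOf sOf aOf := by
  rintro d ⟨i, w, rfl⟩ s
  exact ⟨i, w * s, rfl⟩

theorem f0_hom [Nonempty A] {Bw : Type w} [RAct S Bw] {E : Set (Eqn S A (Fin (N + 1)))}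
    {xOf : Fin k → Fin (N + 1)} {sOf : Fin k → S}
    (ι : A → Bw) (hιinj : Function.Injective ι) (hιhom : IsRActHom S ι)
    (b : Fin (N + 1) → Bw) (hb : IsSolution S ι E b) (aOf : Fin k → A)
    (hvcE : ∀ i, Eqn.vc (xOf i) (sOf i) (aOf i) ∈ E) :
    ∀ d ∈ dset0 E xOf sOf aOf, ∀ s : S,
      f0 E xOf sOf aOf (d ⊳ s) = f0 E xOf sOf aOf d ⊳ s := by
  rintro d ⟨i, w, rfl⟩ s
  have h1 : (Quot.mk (congGen S (rhoGen E xOf sOf aOf))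
      (Quot.mk (congGen S (bigH E xOf sOf)) ((Sum.inr i : Fin (N + 1) ⊕ Fin k), w))) ⊳ s =
      Quot.mk (congGen S (rhoGen E xOf sOf aOf))
      (Quot.mk (congGen S (bigH E xOf sOf)) ((Sum.inr i : Fin (N + 1) ⊕ Fin k), w * s)) := rfl
  rw [h1, f0_val ι hιinj hιhom b hb aOf hvcE, f0_val ι hιinj hιhom b hb aOf hvcE,
    RAct.act_mul]

end Main2
section Main3

variable {S : Type u} [Monoid S] {A : Type v} [RAct S A] {N k : ℕ}

variable (E : Set (Eqn S A (Fin (N + 1)))) (xOf : Fin k → Fin (N + 1)) (sOf : Fin k → S)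
  (aOf : Fin k → A)

/-- The amalgam `B = A ⊔_{A₀} B₀`. -/
noncomputable abbrev amalgB [Nonempty A] :=
  Quot (congGen S (pushGen (dset0 E xOf sOf aOf) (f0 E xOf sOf aOf)))

noncomputable def embB [Nonempty A] : A → amalgB E xOf sOf aOf := fun a =>
  Quot.mk (congGen S (pushGen (dset0 E xOf sOf aOf) (f0 E xOf sOf aOf))) (Sum.inr a)

noncomputable def bbar [Nonempty A] : Fin (N + 1) → amalgB E xOf sOf aOf := fun x =>
  Quot.mk (congGen S (pushGen (dset0 E xOf sOf aOf) (f0 E xOf sOf aOf)))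
    (Sum.inl (Quot.mk (congGen S (rhoGen E xOf sOf aOf))
      (Quot.mk (congGen S (bigH E xOf sOf)) ((Sum.inl x : Fin (N + 1) ⊕ Fin k), 1))))

theorem bbar_act [Nonempty A] (x : Fin (N + 1)) (s : S) :
    bbar E xOf sOf aOf x ⊳ s =
    Quot.mk (congGen S (pushGen (dset0 E xOf sOf aOf) (f0 E xOf sOf aOf)))
      (Sum.inl (Quot.mk (congGen S (rhoGen E xOf sOf aOf))
        (Quot.mk (congGen S (bigH E xOf sOf)) ((Sum.inl x : Fin (N + 1) ⊕ Fin k), s)))) := by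
  show Quot.mk (congGen S (pushGen (dset0 E xOf sOf aOf) (f0 E xOf sOf aOf)))
      (Sum.inl (Quot.mk (congGen S (rhoGen E xOf sOf aOf))
        (Quot.mk (congGen S (bigH E xOf sOf)) ((Sum.inl x : Fin (N + 1) ⊕ Fin k), 1 * s)))) = _
  rw [one_mul]

theorem embB_hom [Nonempty A] : IsRActHom S (embB E xOf sOf aOf) := fun a s => rfl

theorem embB_injective [Nonempty A] {Bw : Type w} [RAct S Bw]
    (ι : A → Bw) (hιinj : Function.Injective ι) (hιhom : IsRActHom S ι)
    (b : Fin (N + 1) → Bw) (hb : IsSolution S ι E b)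
    (hvcE : ∀ i, Eqn.vc (xOf i) (sOf i) (aOf i) ∈ E) :
    Function.Injective (embB E xOf sOf aOf) :=
  push_inr_injective (dset0_closed E xOf sOf aOf) (f0_hom ι hιinj hιhom b hb aOf hvcE)

theorem bbar_solution [Nonempty A] {Bw : Type w} [RAct S Bw]
    (ι : A → Bw) (hιinj : Function.Injective ι) (hιhom : IsRActHom S ι)
    (b : Fin (N + 1) → Bw) (hb : IsSolution S ι E b)
    (hvcE : ∀ i, Eqn.vc (xOf i) (sOf i) (aOf i) ∈ E)
    (hidx : ∀ x s a, Eqn.vc x s a ∈ E → ∃ i, xOf i = x ∧ sOf i = s ∧ aOf i = a) :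
    IsSolution S (embB E xOf sOf aOf) E (bbar E xOf sOf aOf) := by
  constructor
  · intro x u y v hvv
    rw [bbar_act, bbar_act]
    have : Quot.mk (congGen S (bigH E xOf sOf)) ((Sum.inl x : Fin (N + 1) ⊕ Fin k), u) =
        Quot.mk (congGen S (bigH E xOf sOf)) ((Sum.inl y : Fin (N + 1) ⊕ Fin k), v) :=
      Quot.sound (congGen_of_mem (Or.inl ⟨x, u, y, v, hvv, rfl⟩))
    rw [this]
  · intro x s a hvc
    obtain ⟨i, rfl, rfl, rfl⟩ := hidx x s a hvc
    rw [bbar_act]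
    have h1 : Quot.mk (congGen S (bigH E xOf sOf)) ((Sum.inl (xOf i) : Fin (N + 1) ⊕ Fin k), sOf i) =
        Quot.mk (congGen S (bigH E xOf sOf)) ((Sum.inr i : Fin (N + 1) ⊕ Fin k), 1) :=
      Quot.sound (congGen_of_mem (Or.inr ⟨i, rfl⟩))
    rw [h1]
    refine (push_inl_eq_inr (dset0_closed E xOf sOf aOf)
      (f0_hom ι hιinj hιhom b hb aOf hvcE) _ _).mpr ⟨⟨i, 1, rfl⟩, ?_⟩
    rw [f0_val ι hιinj hιhom b hb aOf hvcE, RAct.act_one]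

end Main3
section Main4

variable {S : Type u} [Monoid S] {A : Type v} [RAct S A] {N k : ℕ}

variable (E : Set (Eqn S A (Fin (N + 1)))) (xOf : Fin k → Fin (N + 1)) (sOf : Fin k → S)

/-- Canonical elements of `Q`: `x_last ⊳ w` (for `none`) and `y_j ⊳ w` (for `some j`). -/
def tval : Option (Fin k) → S → Quot (congGen S (bigH E xOf sOf))
  | none, w => Quot.mk (congGen S (bigH E xOf sOf)) ((Sum.inl (Fin.last N) : Fin (N + 1) ⊕ Fin k), w)
  | some j, w => Quot.mk (congGen S (bigH E xOf sOf)) ((Sum.inr j : Fin (N + 1) ⊕ Fin k), w)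

theorem tval_act (o : Option (Fin k)) (w s : S) :
    tval E xOf sOf o w ⊳ s = tval E xOf sOf o (w * s) := by
  cases o <;> rfl

/-- The subact `Q₁` of `Q` generated by `x_last` and the `y_j`. -/
def q1sub : Subact S (Quot (congGen S (bigH E xOf sOf))) where
  carrier := {q | ∃ o : Option (Fin k), ∃ w : S, q = tval E xOf sOf o w}
  closed := by
    rintro q ⟨o, w, rfl⟩ s
    exact ⟨o, w * s, tval_act E xOf sOf o w s⟩

theorem q1sub_fg : IsFG S ↥(q1sub E xOf sOf).carrier := by
  classical
  refine ⟨Finset.univ.image (fun o : Option (Fin k) =>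
    (⟨tval E xOf sOf o 1, o, 1, rfl⟩ : ↥(q1sub E xOf sOf).carrier)), ?_⟩
  rintro ⟨q, o, w, rfl⟩
  refine ⟨⟨tval E xOf sOf o 1, o, 1, rfl⟩, Finset.mem_image_of_mem _ (Finset.mem_univ o), w, ?_⟩
  apply Subtype.ext
  show tval E xOf sOf o w = tval E xOf sOf o 1 ⊳ w
  rw [tval_act, one_mul]

theorem q1sub_fp (hS : RightCoherent S) (hEfin : E.Finite) :
    IsFP S ↥(q1sub E xOf sOf).carrier := by
  refine hS _ _ _ _ (Subtype.val : ↥(q1sub E xOf sOf).carrier → _)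
    (fun a s => rfl) Subtype.val_injective ?_ (q1sub_fg E xOf sOf)
  exact isFP_quot_of_equiv finSumFinEquiv _ (bigH_finite hEfin xOf sOf)

variable (aOf : Fin k → A)

/-- Czar evaluation of canonical generators in `A`, given a candidate value `c`. -/
def cval (c : A) : Option (Fin k) → A
  | none => c
  | some j => aOf j

/-- The translated one-variable equation(s) asserting `cval o ⊳ s = cval o' ⊳ s'`. -/
def eqnOf : Option (Fin k) → S → Option (Fin k) → S → Set (Eqn S A (Fin 1))
  | none, s, none, s' => {Eqn.vv 0 s 0 s'}
  | none, s, some j, s' => {Eqn.vc 0 s (aOf j ⊳ s')}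
  | some j, s, none, s' => {Eqn.vc 0 s' (aOf j ⊳ s)}
  | some _, _, some _, _ => ∅

theorem eqnOf_finite (o o' : Option (Fin k)) (s s' : S) : (eqnOf aOf o s o' s').Finite := by
  cases o <;> cases o' <;>
    first
      | exact Set.finite_singleton _
      | exact Set.finite_empty

theorem eqnOf_sound {p : Set (Eqn S A (Fin 1))} {c : A}
    (csol : IsSolution S id p (fun _ => c)) {o o' : Option (Fin k)} {s s' : S}
    (hsub : eqnOf aOf o s o' s' ⊆ p)
    (hyy : ∀ j j', o = some j → o' = some j' → aOf j ⊳ s = aOf j' ⊳ s') :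
    cval aOf c o ⊳ s = cval aOf c o' ⊳ s' := by
  cases o with
  | none =>
    cases o' with
    | none => exact csol.1 0 s 0 s' (hsub rfl)
    | some j => exact csol.2 0 s (aOf j ⊳ s') (hsub rfl)
  | some j =>
    cases o' with
    | none => exact (csol.2 0 s' (aOf j ⊳ s) (hsub rfl)).symm
    | some j' => exact hyy j j' rfl rfl

/-- Soundness over `B`: a `bval`-equality yields solutions of the translated equations. -/
theorem eqnOf_bval {Bv : Type w} [RAct S Bv] (ιB : A → Bv) (hιB : IsRActHom S ιB)
    (bξ : Bv) {o o' : Option (Fin k)} {s s' : S}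
    (h : (cval (A := Bv) (fun j => ιB (aOf j)) bξ o) ⊳ s =
         (cval (A := Bv) (fun j => ιB (aOf j)) bξ o') ⊳ s') :
    (∀ x u y v', Eqn.vv x u y v' ∈ eqnOf aOf o s o' s' → bξ ⊳ u = bξ ⊳ v') ∧
    (∀ x u a, Eqn.vc x u a ∈ eqnOf aOf o s o' s' → bξ ⊳ u = ιB a) := by
  constructor
  · intro x u y v' hmem
    cases o with
    | none =>
      cases o' with
      | none =>
        have hmem' : Eqn.vv x u y v' = Eqn.vv 0 s 0 s' := hmem
        obtain ⟨rfl, rfl, rfl, rfl⟩ := Eqn.vv.injEq .. ▸ hmem'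
        exact h
      | some j => exact nomatch (show Eqn.vv x u y v' = Eqn.vc 0 s (aOf j ⊳ s') from hmem)
    | some j =>
      cases o' with
      | none => exact nomatch (show Eqn.vv x u y v' = Eqn.vc 0 s' (aOf j ⊳ s) from hmem)
      | some j' => exact hmem.elim
  · intro x u a hmem
    cases o with
    | none =>
      cases o' with
      | none => exact nomatch (show Eqn.vc x u a = Eqn.vv 0 s 0 s' from hmem)
      | some j =>
        have hmem' : Eqn.vc x u a = Eqn.vc 0 s (aOf j ⊳ s') := hmem
        obtain ⟨rfl, rfl, rfl⟩ := Eqn.vc.injEq .. ▸ hmem'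
        rw [hιB]
        exact h
    | some j =>
      cases o' with
      | none =>
        have hmem' : Eqn.vc x u a = Eqn.vc 0 s' (aOf j ⊳ s) := hmem
        obtain ⟨rfl, rfl, rfl⟩ := Eqn.vc.injEq .. ▸ hmem'
        rw [hιB]
        exact h.symm
      | some j' => exact hmem.elim

end Main4
section Main5

variable {S : Type u} [Monoid S] {A : Type v} [RAct S A] {N k : ℕ}

variable (E : Set (Eqn S A (Fin (N + 1)))) (xOf : Fin k → Fin (N + 1)) (sOf : Fin k → S)
  (aOf : Fin k → A)

/-- Evaluation of the canonical generators in the amalgam `B`. -/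
noncomputable def bval [Nonempty A] : Option (Fin k) → amalgB E xOf sOf aOf
  | none => bbar E xOf sOf aOf (Fin.last N)
  | some j => embB E xOf sOf aOf (aOf j)

theorem evB_tval [Nonempty A] {Bw : Type w} [RAct S Bw]
    (ι : A → Bw) (hιinj : Function.Injective ι) (hιhom : IsRActHom S ι)
    (b : Fin (N + 1) → Bw) (hb : IsSolution S ι E b)
    (hvcE : ∀ i, Eqn.vc (xOf i) (sOf i) (aOf i) ∈ E) (o : Option (Fin k)) (w : S) :
    Quot.mk (congGen S (pushGen (dset0 E xOf sOf aOf) (f0 E xOf sOf aOf)))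
      (Sum.inl (Quot.mk (congGen S (rhoGen E xOf sOf aOf)) (tval E xOf sOf o w)))
      = bval E xOf sOf aOf o ⊳ w := by
  cases o with
  | none => exact (bbar_act E xOf sOf aOf (Fin.last N) w).symm
  | some j =>
    have h1 : Quot.mk (congGen S (pushGen (dset0 E xOf sOf aOf) (f0 E xOf sOf aOf)))
        (Sum.inl (Quot.mk (congGen S (rhoGen E xOf sOf aOf)) (tval E xOf sOf (some j) w)))
        = embB E xOf sOf aOf (aOf j ⊳ w) := by
      refine (push_inl_eq_inr (dset0_closed E xOf sOf aOf)
        (f0_hom ι hιinj hιhom b hb aOf hvcE) _ _).mpr ⟨⟨j, w, rfl⟩, ?_⟩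
      exact f0_val ι hιinj hιhom b hb aOf hvcE j w
    rw [h1]
    rfl

variable {m : ℕ} (φ : Fin m × S → ↥(q1sub E xOf sOf).carrier)
  (tag : Fin m → Option (Fin k)) (wOf : Fin m → S)

theorem evB_phi [Nonempty A] {Bw : Type w} [RAct S Bw]
    (ι : A → Bw) (hιinj : Function.Injective ι) (hιhom : IsRActHom S ι)
    (b : Fin (N + 1) → Bw) (hb : IsSolution S ι E b)
    (hvcE : ∀ i, Eqn.vc (xOf i) (sOf i) (aOf i) ∈ E)
    (hφhom : IsRActHom S φ)
    (htag : ∀ i : Fin m, ((φ (i, 1) : ↥(q1sub E xOf sOf).carrier) : Quot (congGen S (bigH E xOf sOf)))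
      = tval E xOf sOf (tag i) (wOf i))
    (p : Fin m × S) :
    Quot.mk (congGen S (pushGen (dset0 E xOf sOf aOf) (f0 E xOf sOf aOf)))
      (Sum.inl (Quot.mk (congGen S (rhoGen E xOf sOf aOf)) ((φ p : ↥(q1sub E xOf sOf).carrier) : Quot (congGen S (bigH E xOf sOf)))))
      = bval E xOf sOf aOf (tag p.1) ⊳ (wOf p.1 * p.2) := by
  have h1 : ((φ p : ↥(q1sub E xOf sOf).carrier) : Quot (congGen S (bigH E xOf sOf)))
      = tval E xOf sOf (tag p.1) (wOf p.1 * p.2) := by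
    conv_lhs => rw [← free_one_act p, hφhom]
    show ((φ (p.1, 1) : ↥(q1sub E xOf sOf).carrier) : Quot (congGen S (bigH E xOf sOf))) ⊳ p.2 = _
    rw [htag, tval_act]
  rw [h1, evB_tval E xOf sOf aOf ι hιinj hιhom b hb hvcE]

/-- The finite one-variable system `p₀` over `A`. -/
def p0set {m' : ℕ} (tag' : Fin m' → Option (Fin k)) (wOf' : Fin m' → S)
    (H' : Set ((Fin m' × S) × (Fin m' × S))) (pzf : Option (Fin k) → Fin m' × S) :
    Set (Eqn S A (Fin 1)) :=
  (⋃ pq ∈ H', eqnOf aOf (tag' pq.1.1) (wOf' pq.1.1 * pq.1.2) (tag' pq.2.1) (wOf' pq.2.1 * pq.2.2)) ∪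
  (⋃ o : Option (Fin k), eqnOf aOf (tag' (pzf o).1) (wOf' (pzf o).1 * (pzf o).2) o 1)

theorem p0set_finite {H' : Set ((Fin m × S) × (Fin m × S))} (hH' : H'.Finite)
    (pzf : Option (Fin k) → Fin m × S) :
    (p0set aOf tag wOf H' pzf).Finite := by
  refine Set.Finite.union (Set.Finite.biUnion hH' fun pq _ => eqnOf_finite aOf _ _ _ _)
    (Set.finite_iUnion fun o => eqnOf_finite aOf _ _ _ _)

theorem p0_bsolution [Nonempty A] {Bw : Type w} [RAct S Bw]
    (ι : A → Bw) (hιinj : Function.Injective ι) (hιhom : IsRActHom S ι)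
    (b : Fin (N + 1) → Bw) (hb : IsSolution S ι E b)
    (hvcE : ∀ i, Eqn.vc (xOf i) (sOf i) (aOf i) ∈ E)
    (hφhom : IsRActHom S φ)
    {H' : Set ((Fin m × S) × (Fin m × S))}
    (hφker : ∀ p q : Fin m × S, φ p = φ q ↔ congGen S H' p q)
    (htag : ∀ i : Fin m, ((φ (i, 1) : ↥(q1sub E xOf sOf).carrier) : Quot (congGen S (bigH E xOf sOf)))
      = tval E xOf sOf (tag i) (wOf i))
    {pzf : Option (Fin k) → Fin m × S}
    (hpz : ∀ o, ((φ (pzf o) : ↥(q1sub E xOf sOf).carrier) : Quot (congGen S (bigH E xOf sOf)))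
      = tval E xOf sOf o 1) :
    IsSolution S (embB E xOf sOf aOf) (p0set aOf tag wOf H' pzf)
      (fun _ => bbar E xOf sOf aOf (Fin.last N)) := by
  have hbv : ∀ pq : (Fin m × S) × (Fin m × S), pq ∈ H' →
      bval E xOf sOf aOf (tag pq.1.1) ⊳ (wOf pq.1.1 * pq.1.2) =
      bval E xOf sOf aOf (tag pq.2.1) ⊳ (wOf pq.2.1 * pq.2.2) := by
    intro pq hpq
    have hφ : φ pq.1 = φ pq.2 := (hφker _ _).mpr (congGen_of_mem hpq)
    rw [← evB_phi E xOf sOf aOf φ tag wOf ι hιinj hιhom b hb hvcE hφhom htag,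
      ← evB_phi E xOf sOf aOf φ tag wOf ι hιinj hιhom b hb hvcE hφhom htag, hφ]
  have hanch : ∀ o : Option (Fin k),
      bval E xOf sOf aOf (tag (pzf o).1) ⊳ (wOf (pzf o).1 * (pzf o).2) =
      bval E xOf sOf aOf o ⊳ (1 : S) := by
    intro o
    rw [← evB_phi E xOf sOf aOf φ tag wOf ι hιinj hιhom b hb hvcE hφhom htag, hpz,
      evB_tval E xOf sOf aOf ι hιinj hιhom b hb hvcE]
  have hbb : bval E xOf sOf aOf none = bbar E xOf sOf aOf (Fin.last N) := rfl
  constructor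
  · rintro x s' y t' (hmem | hmem)
    · obtain ⟨pq, hpq, hmem'⟩ := Set.mem_iUnion₂.mp hmem
      exact (eqnOf_bval aOf (embB E xOf sOf aOf) (embB_hom E xOf sOf aOf) _
        (hbv pq hpq)).1 x s' y t' hmem'
    · obtain ⟨o, hmem'⟩ := Set.mem_iUnion.mp hmem
      exact (eqnOf_bval aOf (embB E xOf sOf aOf) (embB_hom E xOf sOf aOf) _
        (hanch o)).1 x s' y t' hmem'
  · rintro x s' a (hmem | hmem)
    · obtain ⟨pq, hpq, hmem'⟩ := Set.mem_iUnion₂.mp hmem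
      exact (eqnOf_bval aOf (embB E xOf sOf aOf) (embB_hom E xOf sOf aOf) _
        (hbv pq hpq)).2 x s' a hmem'
    · obtain ⟨o, hmem'⟩ := Set.mem_iUnion.mp hmem
      exact (eqnOf_bval aOf (embB E xOf sOf aOf) (embB_hom E xOf sOf aOf) _
        (hanch o)).2 x s' a hmem'

end Main5
section Main6

variable {S : Type u} [Monoid S] {A : Type v} [RAct S A] {N k : ℕ}

variable (E : Set (Eqn S A (Fin (N + 1)))) (xOf : Fin k → Fin (N + 1)) (sOf : Fin k → S)
  (aOf : Fin k → A) {m : ℕ} (φ : Fin m × S → ↥(q1sub E xOf sOf).carrier)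
  (tag : Fin m → Option (Fin k)) (wOf : Fin m → S)

theorem transfer [Nonempty A] {Bw : Type w} [RAct S Bw]
    (ι : A → Bw) (hιinj : Function.Injective ι) (hιhom : IsRActHom S ι)
    (b : Fin (N + 1) → Bw) (hb : IsSolution S ι E b)
    (hvcE : ∀ i, Eqn.vc (xOf i) (sOf i) (aOf i) ∈ E)
    (hφhom : IsRActHom S φ)
    {H' : Set ((Fin m × S) × (Fin m × S))}
    (hφker : ∀ p q : Fin m × S, φ p = φ q ↔ congGen S H' p q)
    (htag : ∀ i : Fin m, ((φ (i, 1) : ↥(q1sub E xOf sOf).carrier) : Quot (congGen S (bigH E xOf sOf)))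
      = tval E xOf sOf (tag i) (wOf i))
    {pzf : Option (Fin k) → Fin m × S}
    (hpz : ∀ o, ((φ (pzf o) : ↥(q1sub E xOf sOf).carrier) : Quot (congGen S (bigH E xOf sOf)))
      = tval E xOf sOf o 1)
    {c : A} (csol : IsSolution S id (p0set aOf tag wOf H' pzf) (fun _ => c)) :
    (∀ s t : S, tval E xOf sOf none s = tval E xOf sOf none t → c ⊳ s = c ⊳ t) ∧
    (∀ (s : S) (j : Fin k) (w : S), tval E xOf sOf none s = tval E xOf sOf (some j) w →
      c ⊳ s = aOf j ⊳ w) := by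
  have hembInj := embB_injective E xOf sOf aOf ι hιinj hιhom b hb hvcE
  -- B-level equalities coming from the presentation
  have hbv : ∀ pq : (Fin m × S) × (Fin m × S), pq ∈ H' →
      bval E xOf sOf aOf (tag pq.1.1) ⊳ (wOf pq.1.1 * pq.1.2) =
      bval E xOf sOf aOf (tag pq.2.1) ⊳ (wOf pq.2.1 * pq.2.2) := by
    intro pq hpq
    have hφ : φ pq.1 = φ pq.2 := (hφker _ _).mpr (congGen_of_mem hpq)
    rw [← evB_phi E xOf sOf aOf φ tag wOf ι hιinj hιhom b hb hvcE hφhom htag,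
      ← evB_phi E xOf sOf aOf φ tag wOf ι hιinj hιhom b hb hvcE hφhom htag, hφ]
  have hanch : ∀ o : Option (Fin k),
      bval E xOf sOf aOf (tag (pzf o).1) ⊳ (wOf (pzf o).1 * (pzf o).2) =
      bval E xOf sOf aOf o ⊳ (1 : S) := by
    intro o
    rw [← evB_phi E xOf sOf aOf φ tag wOf ι hιinj hιhom b hb hvcE hφhom htag, hpz,
      evB_tval E xOf sOf aOf ι hιinj hιhom b hb hvcE]
  -- the A-level facts for pairs whose both sides are constants
  have hAfact : ∀ (o o' : Option (Fin k)) (W W' : S),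
      bval E xOf sOf aOf o ⊳ W = bval E xOf sOf aOf o' ⊳ W' →
      ∀ j j', o = some j → o' = some j' → aOf j ⊳ W = aOf j' ⊳ W' := by
    rintro o o' W W' hB j j' rfl rfl
    apply hembInj
    rw [embB_hom E xOf sOf aOf, embB_hom E xOf sOf aOf]
    exact hB
  -- the candidate evaluation induced by `c`
  set θc : Fin m × S → A := fun p => cval aOf c (tag p.1) ⊳ (wOf p.1 * p.2) with hθc
  have hθhom : IsRActHom S θc := by
    intro p s
    show cval aOf c (tag p.1) ⊳ (wOf p.1 * (p.2 * s)) = _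
    rw [hθc, ← mul_assoc, RAct.act_mul]
  have hresp : ∀ pq ∈ H', θc pq.1 = θc pq.2 := by
    intro pq hpq
    refine eqnOf_sound aOf csol (fun e he => Or.inl (Set.mem_biUnion hpq he)) ?_
    exact hAfact _ _ _ _ (hbv pq hpq)
  have hθ : ∀ p q : Fin m × S, φ p = φ q → θc p = θc q := by
    intro p q h
    exact congGen_lift θc hθhom (fun pr hpr => hresp pr hpr) ((hφker p q).mp h)
  have hanchval : ∀ o : Option (Fin k), θc (pzf o) = cval aOf c o ⊳ (1 : S) := by
    intro o
    refine eqnOf_sound aOf csol (fun e he => Or.inr (Set.mem_iUnion.mpr ⟨o, he⟩)) ?_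
    exact hAfact _ _ _ _ (hanch o)
  have key : ∀ (o o' : Option (Fin k)) (s s' : S),
      tval E xOf sOf o s = tval E xOf sOf o' s' →
      cval aOf c o ⊳ s = cval aOf c o' ⊳ s' := by
    intro o o' s s' hQ
    have hval : ∀ (o₁ : Option (Fin k)) (s₁ : S),
        ((φ ((pzf o₁).1, (pzf o₁).2 * s₁) : ↥(q1sub E xOf sOf).carrier) :
          Quot (congGen S (bigH E xOf sOf))) = tval E xOf sOf o₁ s₁ := by
      intro o₁ s₁
      have h0 : (φ ((pzf o₁).1, (pzf o₁).2 * s₁) : ↥(q1sub E xOf sOf).carrier)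
          = φ (pzf o₁) ⊳ s₁ := hφhom (pzf o₁) s₁
      rw [h0]
      show ((φ (pzf o₁) : ↥(q1sub E xOf sOf).carrier) : Quot (congGen S (bigH E xOf sOf))) ⊳ s₁ = _
      rw [hpz, tval_act, one_mul]
    have h1 : φ ((pzf o).1, (pzf o).2 * s) = φ ((pzf o').1, (pzf o').2 * s') :=
      Subtype.ext (by rw [hval, hval, hQ])
    have h2 := hθ _ _ h1
    have h3 : θc ((pzf o).1, (pzf o).2 * s) = θc (pzf o) ⊳ s := hθhom (pzf o) s
    have h4 : θc ((pzf o').1, (pzf o').2 * s') = θc (pzf o') ⊳ s' := hθhom (pzf o') s'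
    rw [h3, h4, hanchval o, hanchval o', ← RAct.act_mul, ← RAct.act_mul,
      one_mul, one_mul] at h2
    exact h2
  exact ⟨fun s t h => key none none s t h, fun s j w h => key none (some j) s w h⟩

end Main6
section Main7

variable {S : Type u} [Monoid S] {A : Type v} [RAct S A] {N k : ℕ}

variable (E : Set (Eqn S A (Fin (N + 1)))) (xOf : Fin k → Fin (N + 1)) (sOf : Fin k → S)
  (aOf : Fin k → A)

theorem ftype [Nonempty A] {Bw : Type w} [RAct S Bw]
    (ι : A → Bw) (hιinj : Function.Injective ι) (hιhom : IsRActHom S ι)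
    (b : Fin (N + 1) → Bw) (hb : IsSolution S ι E b)
    (hvcE : ∀ i, Eqn.vc (xOf i) (sOf i) (aOf i) ∈ E) {c : A}
    (Ti : ∀ s t : S, tval E xOf sOf none s = tval E xOf sOf none t → c ⊳ s = c ⊳ t)
    (Tii : ∀ (s : S) (j : Fin k) (w : S), tval E xOf sOf none s = tval E xOf sOf (some j) w →
      c ⊳ s = aOf j ⊳ w) :
    (∀ s t : S, bbar E xOf sOf aOf (Fin.last N) ⊳ s = bbar E xOf sOf aOf (Fin.last N) ⊳ t →
      c ⊳ s = c ⊳ t) ∧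
    (∀ (s : S) (a : A), bbar E xOf sOf aOf (Fin.last N) ⊳ s = embB E xOf sOf aOf a →
      c ⊳ s = a) := by
  have hD := dset0_closed E xOf sOf aOf
  have hf := f0_hom (S := S) ι hιinj hιhom b hb aOf hvcE
  have hbs : ∀ s : S, bbar E xOf sOf aOf (Fin.last N) ⊳ s =
      Quot.mk (congGen S (pushGen (dset0 E xOf sOf aOf) (f0 E xOf sOf aOf)))
        (Sum.inl (Quot.mk (congGen S (rhoGen E xOf sOf aOf)) (tval E xOf sOf none s))) :=
    fun s => bbar_act E xOf sOf aOf (Fin.last N) s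
  have keyρ : ∀ (s : S) (i : Fin k) (w : S),
      Quot.mk (congGen S (rhoGen E xOf sOf aOf)) (tval E xOf sOf none s) =
      Quot.mk (congGen S (rhoGen E xOf sOf aOf))
        (Quot.mk (congGen S (bigH E xOf sOf)) ((Sum.inr i : Fin (N + 1) ⊕ Fin k), w)) →
      c ⊳ s = aOf i ⊳ w := by
    intro s i w h
    have hρ := (quot_mk_eq_iff _ _ _).mp h
    rcases (rho_char ι hιinj hιhom b hb aOf hvcE _ _).mp hρ with heq | ⟨j, ω, j', ω', h1, h2, hv⟩
    · exact Tii s i w heq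
    · have e1 : c ⊳ s = aOf j ⊳ ω := Tii s j ω h1
      have e2 : aOf i ⊳ w = aOf j' ⊳ ω' := y_rep_eq ι hιinj hιhom b hb aOf hvcE h2
      rw [e1, e2]
      exact hv
  have keyρ2 : ∀ s t : S,
      Quot.mk (congGen S (rhoGen E xOf sOf aOf)) (tval E xOf sOf none s) =
      Quot.mk (congGen S (rhoGen E xOf sOf aOf)) (tval E xOf sOf none t) →
      c ⊳ s = c ⊳ t := by
    intro s t h
    have hρ := (quot_mk_eq_iff _ _ _).mp h
    rcases (rho_char ι hιinj hιhom b hb aOf hvcE _ _).mp hρ with heq | ⟨j, ω, j', ω', h1, h2, hv⟩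
    · exact Ti s t heq
    · have e1 : c ⊳ s = aOf j ⊳ ω := Tii s j ω h1
      have e2 : c ⊳ t = aOf j' ⊳ ω' := Tii t j' ω' h2
      rw [e1, e2]
      exact hv
  constructor
  · intro s t h
    rw [hbs, hbs] at h
    rcases (push_inl_eq_inl hD hf _ _).mp h with heq | ⟨⟨i, w, hds⟩, ⟨i', w', hdt⟩, hval⟩
    · exact keyρ2 s t heq
    · have e1 : c ⊳ s = aOf i ⊳ w := keyρ s i w hds
      have e2 : c ⊳ t = aOf i' ⊳ w' := keyρ t i' w' hdt
      rw [hds, hdt, f0_val ι hιinj hιhom b hb aOf hvcE, f0_val ι hιinj hιhom b hb aOf hvcE] at hval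
      rw [e1, e2]
      exact hval
  · intro s a h
    rw [hbs] at h
    obtain ⟨⟨i, w, hds⟩, hfval⟩ := (push_inl_eq_inr hD hf _ _).mp h
    have e1 : c ⊳ s = aOf i ⊳ w := keyρ s i w hds
    rw [hds, f0_val ι hιinj hιhom b hb aOf hvcE] at hfval
    rw [e1]
    exact hfval

end Main7
section Main8

variable {S : Type u} [Monoid S] {A : Type v} [RAct S A] {N : ℕ}

/-- The system in the remaining `N` variables, after substituting `c` for the last one. -/
def substSet (c : A) : Eqn S A (Fin (N + 1)) → Set (Eqn S A (Fin N))
  | Eqn.vv x u y v =>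
    if hx : x = Fin.last N then
      (if hy : y = Fin.last N then ∅ else {Eqn.vc (y.castPred hy) v (c ⊳ u)})
    else
      (if hy : y = Fin.last N then {Eqn.vc (x.castPred hx) u (c ⊳ v)}
       else {Eqn.vv (x.castPred hx) u (y.castPred hy) v})
  | Eqn.vc x s a =>
    if hx : x = Fin.last N then ∅ else {Eqn.vc (x.castPred hx) s a}

theorem substSet_finite (c : A) (e : Eqn S A (Fin (N + 1))) : (substSet c e).Finite := by
  cases e with
  | vv x u y v =>
    rw [substSet]
    split_ifs <;> first | exact Set.finite_empty | exact Set.finite_singleton _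
  | vc x s a =>
    rw [substSet]
    split_ifs <;> first | exact Set.finite_empty | exact Set.finite_singleton _

end Main8
theorem npure_succ {S : Type u} [Monoid S] (hS : RightCoherent S) {A : Type v} [RAct S A]
    (hA : AlmostPure S A) (hAne : Nonempty A) (N : ℕ) (ih : NPure S A N) :
    NPure S A (N + 1) := by
  classical
  haveI : Nonempty A := hAne
  intro E hEfin hEcons
  obtain ⟨Bw, instBw, ι, hιinj, hιhom, b, hb⟩ := hEcons
  -- enumerate the constants of `E`
  set vcs := hEfin.toFinset.filter (fun e => ∃ x s a, e = Eqn.vc x s a) with hvcsdef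
  set k := vcs.card with hkdef
  have hform : ∀ i : Fin k, ∃ x s a,
      ((vcs.equivFin.symm i : {x // x ∈ vcs}) : Eqn S A (Fin (N + 1))) = Eqn.vc x s a := by
    intro i
    have h := Finset.mem_filter.mp (vcs.equivFin.symm i).2
    exact h.2
  choose xOf sOf aOf hvc using hform
  have hvcE : ∀ i, Eqn.vc (xOf i) (sOf i) (aOf i) ∈ E := by
    intro i
    have h := Finset.mem_filter.mp (vcs.equivFin.symm i).2
    have h1 := hEfin.mem_toFinset.mp h.1
    rw [hvc i] at h1
    exact h1
  have hidx : ∀ x s a, Eqn.vc x s a ∈ E → ∃ i, xOf i = x ∧ sOf i = s ∧ aOf i = a := by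
    intro x s a hE
    have hm : Eqn.vc x s a ∈ vcs :=
      Finset.mem_filter.mpr ⟨hEfin.mem_toFinset.mpr hE, x, s, a, rfl⟩
    refine ⟨vcs.equivFin ⟨_, hm⟩, ?_⟩
    have h := hvc (vcs.equivFin ⟨_, hm⟩)
    rw [Equiv.symm_apply_apply] at h
    have h' : Eqn.vc x s a = Eqn.vc (xOf (vcs.equivFin ⟨_, hm⟩)) (sOf (vcs.equivFin ⟨_, hm⟩))
        (aOf (vcs.equivFin ⟨_, hm⟩)) := h
    injection h' with h1 h2 h3
    exact ⟨h1.symm, h2.symm, h3.symm⟩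
  -- the finite presentation of `Q₁` from coherency
  obtain ⟨m, H', hH'fin, φ, hφhom, hφsurj, hφker⟩ := q1sub_fp E xOf sOf hS hEfin
  choose tag wOf htag using (fun i : Fin m => (φ (i, 1)).2)
  choose pzf hpz0 using (fun o : Option (Fin k) =>
    hφsurj ⟨tval E xOf sOf o 1, o, 1, rfl⟩)
  have hpz : ∀ o, ((φ (pzf o) : ↥(q1sub E xOf sOf).carrier) :
      Quot (congGen S (bigH E xOf sOf))) = tval E xOf sOf o 1 :=
    fun o => congrArg Subtype.val (hpz0 o)
  -- the finite one-variable system and its solution `c`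
  have p0cons : Consistent S (p0set aOf tag wOf H' pzf) :=
    ⟨amalgB E xOf sOf aOf, inferInstance, embB E xOf sOf aOf,
      embB_injective E xOf sOf aOf ι hιinj hιhom b hb hvcE, embB_hom E xOf sOf aOf,
      fun _ => bbar E xOf sOf aOf (Fin.last N),
      p0_bsolution E xOf sOf aOf φ tag wOf ι hιinj hιhom b hb hvcE hφhom hφker htag hpz⟩
  obtain ⟨sol, hsol⟩ := hA _ (p0set_finite aOf tag wOf hH'fin pzf) p0cons
  set c := sol 0 with hcdef
  have csol : IsSolution S id (p0set aOf tag wOf H' pzf) (fun _ => c) := by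
    have : (fun _ : Fin 1 => c) = sol := funext fun x => by rw [Subsingleton.elim x 0]
    rw [this]
    exact hsol
  obtain ⟨Ti, Tii⟩ := transfer E xOf sOf aOf φ tag wOf ι hιinj hιhom b hb hvcE hφhom hφker
    htag hpz csol
  obtain ⟨FTi, FTii⟩ := ftype E xOf sOf aOf ι hιinj hιhom b hb hvcE Ti Tii
  -- the retraction of `⟨A, b̄_last⟩` onto `A`
  have hfexists : ∃ fD : amalgB E xOf sOf aOf → A,
      (∀ a : A, fD (embB E xOf sOf aOf a) = a) ∧
      (∀ s : S, fD (bbar E xOf sOf aOf (Fin.last N) ⊳ s) = c ⊳ s) := by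
    refine ⟨fun d =>
      if h1 : ∃ a : A, d = embB E xOf sOf aOf a then h1.choose
      else if h2 : ∃ s : S, d = bbar E xOf sOf aOf (Fin.last N) ⊳ s then c ⊳ h2.choose
      else Classical.arbitrary A, ?_, ?_⟩
    · intro a
      beta_reduce
      have h1 : ∃ a' : A, embB E xOf sOf aOf a = embB E xOf sOf aOf a' := ⟨a, rfl⟩
      rw [dif_pos h1]
      exact (embB_injective E xOf sOf aOf ι hιinj hιhom b hb hvcE h1.choose_spec).symm
    · intro s
      beta_reduce
      by_cases h1 : ∃ a' : A, bbar E xOf sOf aOf (Fin.last N) ⊳ s = embB E xOf sOf aOf a'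
      · rw [dif_pos h1]
        exact (FTii s h1.choose h1.choose_spec).symm
      · have h2 : ∃ s' : S, bbar E xOf sOf aOf (Fin.last N) ⊳ s
            = bbar E xOf sOf aOf (Fin.last N) ⊳ s' := ⟨s, rfl⟩
        rw [dif_neg h1, dif_pos h2]
        exact (FTi s h2.choose h2.choose_spec).symm
  obtain ⟨fD, hfD1, hfD2⟩ := hfexists
  set dsetB : Set (amalgB E xOf sOf aOf) :=
    {d | (∃ a : A, d = embB E xOf sOf aOf a) ∨
      ∃ s : S, d = bbar E xOf sOf aOf (Fin.last N) ⊳ s} with hdsetBdef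
  have hdsetB : ∀ d ∈ dsetB, ∀ s' : S, d ⊳ s' ∈ dsetB := by
    rintro d (⟨a, rfl⟩ | ⟨s, rfl⟩) s'
    · exact Or.inl ⟨a ⊳ s', (embB_hom E xOf sOf aOf a s').symm⟩
    · exact Or.inr ⟨s * s', (RAct.act_mul _ s s').symm⟩
  have hfDhom : ∀ d ∈ dsetB, ∀ s' : S, fD (d ⊳ s') = fD d ⊳ s' := by
    rintro d (⟨a, rfl⟩ | ⟨s, rfl⟩) s'
    · have h : embB E xOf sOf aOf a ⊳ s' = embB E xOf sOf aOf (a ⊳ s') :=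
        (embB_hom E xOf sOf aOf a s').symm
      rw [h, hfD1, hfD1]
    · have h : (bbar E xOf sOf aOf (Fin.last N) ⊳ s) ⊳ s'
          = bbar E xOf sOf aOf (Fin.last N) ⊳ (s * s') := (RAct.act_mul _ s s').symm
      rw [h, hfD2, hfD2, RAct.act_mul]
  -- the substituted system
  set E' := ⋃ e ∈ E, substSet c e with hE'def
  have hE'fin : E'.Finite := Set.Finite.biUnion hEfin fun e _ => substSet_finite c e
  have hbsol := bbar_solution E xOf sOf aOf ι hιinj hιhom b hb hvcE hidx
  have hE'cons : Consistent S E' := by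
    refine ⟨Quot (congGen S (pushGen dsetB fD)), inferInstance,
      fun a => Quot.mk (congGen S (pushGen dsetB fD)) (Sum.inr a),
      push_inr_injective hdsetB hfDhom, push_inr_hom,
      fun x => Quot.mk (congGen S (pushGen dsetB fD))
        (Sum.inl (bbar E xOf sOf aOf x.castSucc)), ?_, ?_⟩
    · intro x' u' y' v' hmem
      obtain ⟨e, heE, hmem'⟩ := Set.mem_iUnion₂.mp hmem
      cases e with
      | vv x u y v =>
        rw [substSet] at hmem'
        by_cases hx : x = Fin.last N
        · rw [dif_pos hx] at hmem'
          by_cases hy : y = Fin.last N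
          · rw [dif_pos hy] at hmem'
            exact hmem'.elim
          · rw [dif_neg hy] at hmem'
            exact nomatch
              (show Eqn.vv x' u' y' v' = Eqn.vc (y.castPred hy) v (c ⊳ u) from hmem')
        · rw [dif_neg hx] at hmem'
          by_cases hy : y = Fin.last N
          · rw [dif_pos hy] at hmem'
            exact nomatch
              (show Eqn.vv x' u' y' v' = Eqn.vc (x.castPred hx) u (c ⊳ v) from hmem')
          · rw [dif_neg hy] at hmem'
            have h' : Eqn.vv x' u' y' v'
                = Eqn.vv (x.castPred hx) u (y.castPred hy) v := hmem'
            obtain ⟨rfl, rfl, rfl, rfl⟩ := Eqn.vv.injEq .. ▸ h'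
            show Quot.mk (congGen S (pushGen dsetB fD))
                (Sum.inl (bbar E xOf sOf aOf ((x.castPred hx).castSucc) ⊳ u'))
              = Quot.mk (congGen S (pushGen dsetB fD))
                (Sum.inl (bbar E xOf sOf aOf ((y.castPred hy).castSucc) ⊳ v'))
            rw [Fin.castSucc_castPred, Fin.castSucc_castPred, hbsol.1 x u' y v' heE]
      | vc x s a =>
        rw [substSet] at hmem'
        by_cases hx : x = Fin.last N
        · rw [dif_pos hx] at hmem'
          exact hmem'.elim
        · rw [dif_neg hx] at hmem'
          exact nomatch
            (show Eqn.vv x' u' y' v' = Eqn.vc (x.castPred hx) s a from hmem')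
    · intro x' u' a' hmem
      obtain ⟨e, heE, hmem'⟩ := Set.mem_iUnion₂.mp hmem
      cases e with
      | vv x u y v =>
        rw [substSet] at hmem'
        by_cases hx : x = Fin.last N
        · rw [dif_pos hx] at hmem'
          by_cases hy : y = Fin.last N
          · rw [dif_pos hy] at hmem'
            exact hmem'.elim
          · rw [dif_neg hy] at hmem'
            have h' : Eqn.vc x' u' a' = Eqn.vc (y.castPred hy) v (c ⊳ u) := hmem'
            obtain ⟨rfl, rfl, rfl⟩ := Eqn.vc.injEq .. ▸ h'
            have hbb := hbsol.1 x u y u' heE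
            rw [hx] at hbb
            show Quot.mk (congGen S (pushGen dsetB fD))
                (Sum.inl (bbar E xOf sOf aOf ((y.castPred hy).castSucc) ⊳ u'))
              = Quot.mk (congGen S (pushGen dsetB fD)) (Sum.inr (c ⊳ u))
            rw [Fin.castSucc_castPred, ← hbb]
            exact (push_inl_eq_inr hdsetB hfDhom _ _).mpr ⟨Or.inr ⟨u, rfl⟩, hfD2 u⟩
        · rw [dif_neg hx] at hmem'
          by_cases hy : y = Fin.last N
          · rw [dif_pos hy] at hmem'
            have h' : Eqn.vc x' u' a' = Eqn.vc (x.castPred hx) u (c ⊳ v) := hmem'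
            obtain ⟨rfl, rfl, rfl⟩ := Eqn.vc.injEq .. ▸ h'
            have hbb := hbsol.1 x u' y v heE
            rw [hy] at hbb
            show Quot.mk (congGen S (pushGen dsetB fD))
                (Sum.inl (bbar E xOf sOf aOf ((x.castPred hx).castSucc) ⊳ u'))
              = Quot.mk (congGen S (pushGen dsetB fD)) (Sum.inr (c ⊳ v))
            rw [Fin.castSucc_castPred, hbb]
            exact (push_inl_eq_inr hdsetB hfDhom _ _).mpr ⟨Or.inr ⟨v, rfl⟩, hfD2 v⟩
          · rw [dif_neg hy] at hmem'
            exact nomatch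
              (show Eqn.vc x' u' a' = Eqn.vv (x.castPred hx) u (y.castPred hy) v from hmem')
      | vc x s a =>
        rw [substSet] at hmem'
        by_cases hx : x = Fin.last N
        · rw [dif_pos hx] at hmem'
          exact hmem'.elim
        · rw [dif_neg hx] at hmem'
          have h' : Eqn.vc x' u' a' = Eqn.vc (x.castPred hx) s a := hmem'
          obtain ⟨rfl, rfl, rfl⟩ := Eqn.vc.injEq .. ▸ h'
          have hbb := hbsol.2 x u' a' heE
          show Quot.mk (congGen S (pushGen dsetB fD))
              (Sum.inl (bbar E xOf sOf aOf ((x.castPred hx).castSucc) ⊳ u'))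
            = Quot.mk (congGen S (pushGen dsetB fD)) (Sum.inr a')
          rw [Fin.castSucc_castPred, hbb]
          exact (push_inl_eq_inr hdsetB hfDhom _ _).mpr ⟨Or.inl ⟨a', rfl⟩, hfD1 a'⟩
  obtain ⟨c', hc'⟩ := ih E' hE'fin hE'cons
  refine ⟨fun x => if hx : x = Fin.last N then c else c' (x.castPred hx), ?_, ?_⟩
  · intro x u y v hE
    beta_reduce
    by_cases hx : x = Fin.last N <;> by_cases hy : y = Fin.last N
    · rw [dif_pos hx, dif_pos hy]
      have hbb := hbsol.1 x u y v hE
      rw [hx, hy] at hbb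
      exact FTi u v hbb
    · rw [dif_pos hx, dif_neg hy]
      have hmem : Eqn.vc (y.castPred hy) v (c ⊳ u) ∈ E' :=
        Set.mem_biUnion hE (show _ ∈ substSet c (Eqn.vv x u y v) by
          rw [substSet, dif_pos hx, dif_neg hy]; rfl)
      exact (hc'.2 _ _ _ hmem).symm
    · rw [dif_neg hx, dif_pos hy]
      have hmem : Eqn.vc (x.castPred hx) u (c ⊳ v) ∈ E' :=
        Set.mem_biUnion hE (show _ ∈ substSet c (Eqn.vv x u y v) by
          rw [substSet, dif_neg hx, dif_pos hy]; rfl)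
      exact hc'.2 _ _ _ hmem
    · rw [dif_neg hx, dif_neg hy]
      have hmem : Eqn.vv (x.castPred hx) u (y.castPred hy) v ∈ E' :=
        Set.mem_biUnion hE (show _ ∈ substSet c (Eqn.vv x u y v) by
          rw [substSet, dif_neg hx, dif_neg hy]; rfl)
      exact hc'.1 _ _ _ _ hmem
  · intro x s a hE
    beta_reduce
    by_cases hx : x = Fin.last N
    · rw [dif_pos hx]
      have hbb := hbsol.2 x s a hE
      rw [hx] at hbb
      exact FTii s a hbb
    · rw [dif_neg hx]
      have hmem : Eqn.vc (x.castPred hx) s a ∈ E' :=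
        Set.mem_biUnion hE (show _ ∈ substSet c (Eqn.vc x s a) by
          rw [substSet, dif_neg hx]; rfl)
      exact hc'.2 _ _ _ hmem
instance punitAct (S : Type u) [Monoid S] : RAct S PUnit.{w + 1} where
  act _ _ := PUnit.unit
  act_one _ := rfl
  act_mul _ _ _ := rfl

/-- Over a right coherent monoid, every almost pure act is absolutely pure. -/
theorem coherent_almostPure_absolutelyPure (S : Type u) [Monoid S]
    (hS : RightCoherent S) (A : Type v) [RAct S A]
    (hA : AlmostPure S A) : AbsolutelyPure S A := by
  have hAne : Nonempty A := by
    have hcons : Consistent S (∅ : Set (Eqn S A (Fin 1))) :=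
      ⟨A ⊕ PUnit.{max u v + 1}, inferInstance, Sum.inl, fun a a' h => by
        injection h, fun a s => rfl, fun _ => Sum.inr PUnit.unit,
        fun x s y t h => h.elim, fun x s a h => h.elim⟩
    obtain ⟨c, -⟩ := hA ∅ Set.finite_empty hcons
    exact ⟨c 0⟩
  intro n
  induction n with
  | zero =>
    intro E hfin hcons
    exact ⟨fun x => x.elim0, fun x => x.elim0, fun x => x.elim0⟩
  | succ N ihN => exact npure_succ hS hA hAne N ihN
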